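/- The Riemann Xi function satisfies Ξ(t) = O(t^A · e^{−πt/4}) as t → ∞ for some positive constant A, where Ξ(t) = ξ(1/2 + it) and ξ(s) = (1/2)·s·(s−1)·π^{−s/2}·Γ(s/2)·ζ(s). -/

import Mathlib

open Real Complex

noncomputable def riemannXiFn (s : ℂ) : ℂ :=
  (1 / 2 : ℂ) * s * (s - 1) * (π : ℂ) ^ (-s / 2) * Complex.Gamma (s / 2) * riemannZeta s

noncomputable def riemannXiCap (t : ℝ) : ℂ :=
  riemannXiFn (1 / 2 + Complex.I * (t : ℂ))

lemma gamma_abs_sq (y : ℝ) (hy : y ≠ 0) :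
    (‖Complex.Gamma (1 + y * Complex.I)‖) ^ 2
      = π * y / Real.sinh (π * y) := by
  have h1 : Complex.Gamma (1 - y * Complex.I) = (starRingEnd ℂ) (Complex.Gamma (1 + y * Complex.I)) := by
    rw [← Complex.Gamma_conj]
    congr 1
    simp [Complex.ext_iff]
  have h2 : Complex.Gamma (1 + y * Complex.I) * Complex.Gamma (1 - y * Complex.I)
      = (π * y / Real.sinh (π * y) : ℝ) := by
    have hz : (y : ℂ) * Complex.I ≠ 0 := by
      simp [Complex.ext_iff, hy]
    have hadd : Complex.Gamma (y * Complex.I + 1) = (y * Complex.I) * Complex.Gamma (y * Complex.I) :=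
      Complex.Gamma_add_one _ hz
    have hrefl : Complex.Gamma (y * Complex.I) * Complex.Gamma (1 - y * Complex.I)
        = (π : ℂ) / Complex.sin (π * (y * Complex.I)) := Complex.Gamma_mul_Gamma_one_sub _
    have hsin : Complex.sin ((π : ℂ) * (y * Complex.I)) = Real.sinh (π * y) * Complex.I := by
      rw [show (π : ℂ) * ((y : ℂ) * Complex.I) = ((π * y : ℝ) : ℂ) * Complex.I by push_cast; ring,
        Complex.sin_mul_I, Complex.ofReal_sinh]
    have hsinh : Real.sinh (π * y) ≠ 0 := by
      simp [Real.sinh_eq_zero, Real.pi_ne_zero, hy]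
    rw [show (1 : ℂ) + y * Complex.I = y * Complex.I + 1 by ring, hadd]
    have hsinh' : ((Real.sinh (π * y) : ℝ) : ℂ) ≠ 0 := Complex.ofReal_ne_zero.mpr hsinh
    rw [mul_assoc, hrefl, hsin, Complex.ofReal_div, Complex.ofReal_mul]
    field_simp
  have h3 := congrArg (‖·‖) h2
  rw [norm_mul, h1, Complex.norm_conj, ← sq] at h3
  have h4 : 0 ≤ π * y / Real.sinh (π * y) := by
    rcases lt_or_gt_of_ne hy with h | h
    · have : Real.sinh (π * y) < 0 := by
        rw [← Real.sinh_zero]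
        exact Real.sinh_lt_sinh.mpr (by nlinarith [Real.pi_pos])
      apply div_nonneg_of_nonpos (by nlinarith [Real.pi_pos]) this.le
    · have : 0 < Real.sinh (π * y) := by
        rw [← Real.sinh_zero]
        exact Real.sinh_lt_sinh.mpr (by nlinarith [Real.pi_pos])
      positivity
  rw [h3, Complex.norm_real, Real.norm_eq_abs, _root_.abs_of_nonneg h4]

lemma sinh_lower {x : ℝ} (hx : 1 ≤ x) : Real.exp x ≤ 4 * Real.sinh x := by
  rw [Real.sinh_eq]
  have h1 := Real.add_one_le_exp (2 * x)
  have h2 : Real.exp (2 * x) = Real.exp x * Real.exp x := by rw [two_mul, Real.exp_add]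
  have h3 : Real.exp (-x) = 1 / Real.exp x := by rw [Real.exp_neg]; ring
  have h4 := Real.exp_pos x
  rw [h3]
  rw [h2] at h1
  have h5 : 2 / Real.exp x ≤ Real.exp x := by
    rw [div_le_iff₀ h4]
    nlinarith
  have h6 : 2 / Real.exp x = 2 * (1 / Real.exp x) := by ring
  linarith

lemma gamma_abs_sym (y : ℝ) :
    ‖Complex.Gamma (1 + y * Complex.I)‖
      = ‖Complex.Gamma (1 + |y| * Complex.I)‖ := by
  rcases abs_cases y with ⟨h, _⟩ | ⟨h, _⟩
  · rw [h]
  · rw [h]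
    have : (1 : ℂ) + y * Complex.I = (starRingEnd ℂ) (1 + (-y) * Complex.I) := by
      simp [Complex.ext_iff]
    rw [this, Complex.Gamma_conj, Complex.norm_conj]
    norm_num

lemma gamma_decay : ∃ K : ℝ, 1 ≤ K ∧ ∀ y : ℝ,
    ‖Complex.Gamma (1 + y * Complex.I)‖
      ≤ K * (1 + |y|) * Real.exp (-π * |y| / 2) := by
  refine ⟨Real.exp π + 4 * π, by nlinarith [Real.exp_pos π, Real.pi_pos, Real.one_le_exp Real.pi_pos.le], fun y ↦ ?_⟩
  set K := Real.exp π + 4 * π with hK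
  have hK1 : 1 ≤ K := by nlinarith [Real.exp_pos π, Real.pi_pos, Real.one_le_exp Real.pi_pos.le]
  rw [gamma_abs_sym]
  set v := |y| with hv
  have hv0 : 0 ≤ v := abs_nonneg y
  rcases eq_or_lt_of_le hv0 with h0 | h0
  · rw [← h0]
    norm_num [Complex.Gamma_one]
    nlinarith [Real.exp_pos π, Real.pi_pos]
  · -- v > 0
    have key : (‖Complex.Gamma (1 + v * Complex.I)‖) ^ 2
        ≤ (K * (1 + v) * Real.exp (-π * v / 2)) ^ 2 := by
      rw [gamma_abs_sq v h0.ne']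
      have hrhs : (K * (1 + v) * Real.exp (-π * v / 2)) ^ 2
          = K ^ 2 * (1 + v) ^ 2 * Real.exp (-π * v) := by
        have : Real.exp (-π * v / 2) ^ 2 = Real.exp (-π * v) := by
          rw [← Real.exp_nat_mul]
          norm_num
          ring
        rw [mul_pow, mul_pow, this]
      rw [hrhs]
      have hπv : 0 < π * v := by positivity
      have hexp : Real.exp (-π * v) = (Real.exp (π * v))⁻¹ := by
        rw [show -π * v = -(π * v) by ring, Real.exp_neg]
      rcases le_or_gt v 1 with hv1 | hv1
      · have h1 : π * v / Real.sinh (π * v) ≤ 1 := by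
          rw [div_le_one (by rw [← Real.sinh_zero]; exact Real.sinh_lt_sinh.mpr hπv)]
          exact (Real.self_lt_sinh_iff.mpr hπv).le
        have hinv : (Real.exp π)⁻¹ ≤ Real.exp (-π * v) := by
          rw [← Real.exp_neg]
          apply Real.exp_le_exp.mpr
          nlinarith [Real.pi_pos]
        have hKsq : Real.exp π * Real.exp π ≤ K ^ 2 := by
          nlinarith [Real.exp_pos π, Real.pi_pos]
        have h3 : (1:ℝ) ≤ Real.exp π := Real.one_le_exp Real.pi_pos.le
        calc π * v / Real.sinh (π * v) ≤ 1 := h1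
          _ ≤ Real.exp π := h3
          _ = Real.exp π * Real.exp π * (Real.exp π)⁻¹ := by field_simp
          _ ≤ K ^ 2 * Real.exp (-π * v) :=
              mul_le_mul hKsq hinv (by positivity) (by positivity)
          _ = K ^ 2 * 1 * Real.exp (-π * v) := by ring
          _ ≤ K ^ 2 * (1 + v) ^ 2 * Real.exp (-π * v) := by
              gcongr
              nlinarith
      · have hπv1 : 1 ≤ π * v := by nlinarith [Real.pi_gt_three]
        have hs := sinh_lower hπv1
        have hS : 0 < Real.sinh (π * v) := by
          rw [← Real.sinh_zero]; exact Real.sinh_lt_sinh.mpr hπv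
        have hee : Real.exp (-π * v) * Real.exp (π * v) = 1 := by
          rw [← Real.exp_add]; norm_num
        have h4 : 1 ≤ 4 * (Real.exp (-π * v) * Real.sinh (π * v)) := by
          nlinarith [Real.exp_pos (-π * v)]
        have h1 : π * v / Real.sinh (π * v) ≤ 4 * (π * v) * Real.exp (-π * v) := by
          rw [div_le_iff₀ hS]
          nlinarith [mul_le_mul_of_nonneg_left h4 hπv.le]
        have hb : 4 * π ≤ K ^ 2 := by
          nlinarith [Real.exp_pos π, Real.pi_gt_three]
        have ha : v ≤ (1 + v) ^ 2 := by nlinarith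
        calc π * v / Real.sinh (π * v) ≤ 4 * (π * v) * Real.exp (-π * v) := h1
          _ = (4 * π) * v * Real.exp (-π * v) := by ring
          _ ≤ K ^ 2 * (1 + v) ^ 2 * Real.exp (-π * v) := by
              apply mul_le_mul_of_nonneg_right _ (Real.exp_pos _).le
              exact mul_le_mul hb ha h0.le (by positivity)
    have h2 : 0 ≤ K * (1 + v) * Real.exp (-π * v / 2) := by positivity
    exact (pow_le_pow_iff_left₀ (norm_nonneg _) h2 two_ne_zero).mp key

lemma zeta_edge_bound (s : ℂ) (h : s.re = 2) : ‖riemannZeta s‖ ≤ 2 := by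
  have h1 : 1 < s.re := by rw [h]; norm_num
  rw [zeta_eq_tsum_one_div_nat_cpow h1]
  have hnorm : ∀ n : ℕ, ‖1 / (n : ℂ) ^ s‖ = 1 / (n : ℝ) ^ 2 := by
    intro n
    rcases Nat.eq_zero_or_pos n with h0 | hpos
    · subst h0
      simp only [Nat.cast_zero]
      rw [Complex.zero_cpow (fun hs => by simp [hs] at h)]
      simp
    · have hgt : (0 : ℝ) < (n : ℝ) := by exact_mod_cast hpos
      rw [norm_div, norm_one,
        show ((n : ℕ) : ℂ) = (((n : ℝ)) : ℂ) by push_cast; rfl,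
        Complex.norm_cpow_eq_rpow_re_of_pos hgt, h,
        show (2 : ℝ) = ((2 : ℕ) : ℝ) by norm_num, Real.rpow_natCast]
  have hsum : Summable fun n : ℕ => ‖1 / (n : ℂ) ^ s‖ := by
    apply Summable.congr hasSum_zeta_two.summable
    intro n
    rw [hnorm n]
  calc ‖∑' n : ℕ, 1 / (n : ℂ) ^ s‖ ≤ ∑' n : ℕ, ‖1 / (n : ℂ) ^ s‖ :=
        norm_tsum_le_tsum_norm hsum
    _ = ∑' n : ℕ, (1 : ℝ) / (n : ℝ) ^ 2 := tsum_congr hnorm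
    _ = π ^ 2 / 6 := hasSum_zeta_two.tsum_eq
    _ ≤ 2 := by nlinarith [Real.pi_lt_d2, Real.pi_pos]

lemma mellin_strip_bound (f : ℝ → ℂ) (a b : ℝ)
    (h : ∀ s : ℂ, MellinConvergent f s) :
    ∃ M : ℝ, 0 ≤ M ∧ ∀ s : ℂ, a ≤ s.re → s.re ≤ b → ‖mellin f s‖ ≤ M := by
  refine ⟨(∫ x in Set.Ioi (0:ℝ), ‖(x : ℂ) ^ ((a : ℂ) - 1) • f x‖)
      + ∫ x in Set.Ioi (0:ℝ), ‖(x : ℂ) ^ ((b : ℂ) - 1) • f x‖,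
    by positivity, fun s ha hb => ?_⟩
  have hfa := (h (a : ℂ)).norm
  have hfb := (h (b : ℂ)).norm
  have hfs := (h s).norm
  have hpt : ∀ x ∈ Set.Ioi (0:ℝ), ‖(x : ℂ) ^ (s - 1) • f x‖
      ≤ ‖(x : ℂ) ^ ((a : ℂ) - 1) • f x‖ + ‖(x : ℂ) ^ ((b : ℂ) - 1) • f x‖ := by
    intro x hx
    rw [Set.mem_Ioi] at hx
    have habs : ∀ w : ℂ, ‖(x : ℂ) ^ w • f x‖ = x ^ (w.re) * ‖f x‖ := by
      intro w
      rw [norm_smul, Complex.norm_cpow_eq_rpow_re_of_pos hx]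
    rw [habs, habs, habs]
    have h1 : x ^ (s - 1).re ≤ x ^ ((a : ℂ) - 1).re + x ^ ((b : ℂ) - 1).re := by
      simp only [Complex.sub_re, Complex.one_re, Complex.ofReal_re]
      rcases le_total x 1 with hx1 | hx1
      · have := Real.rpow_le_rpow_of_exponent_ge hx hx1 (by linarith : a - 1 ≤ s.re - 1)
        have h2 : (0:ℝ) ≤ x ^ (b - 1) := (Real.rpow_pos_of_pos hx _).le
        linarith
      · have := Real.rpow_le_rpow_of_exponent_le hx1 (by linarith : s.re - 1 ≤ b - 1)
        have h2 : (0:ℝ) ≤ x ^ (a - 1) := (Real.rpow_pos_of_pos hx _).le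
        linarith
    nlinarith [norm_nonneg (f x), Real.rpow_pos_of_pos hx (s-1).re]
  calc ‖mellin f s‖ ≤ ∫ x in Set.Ioi (0:ℝ), ‖(x : ℂ) ^ (s - 1) • f x‖ :=
        MeasureTheory.norm_integral_le_integral_norm _
    _ ≤ ∫ x in Set.Ioi (0:ℝ), (‖(x : ℂ) ^ ((a : ℂ) - 1) • f x‖
          + ‖(x : ℂ) ^ ((b : ℂ) - 1) • f x‖) :=
        MeasureTheory.setIntegral_mono_on hfs (hfa.add hfb) measurableSet_Ioi hpt
    _ = _ := MeasureTheory.integral_add hfa hfb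

lemma Lambda0_strip_bound : ∃ M : ℝ, 0 < M ∧ ∀ s : ℂ, -1 ≤ s.re → s.re ≤ 2 →
    ‖completedRiemannZeta₀ s‖ ≤ M := by
  set P := HurwitzZeta.hurwitzEvenFEPair (0 : UnitAddCircle) with hP
  have hmc : ∀ w : ℂ, MellinConvergent P.f_modif w :=
    fun w => (P.isStrongFEPair_toStrongFEPair.hasMellin w).1
  obtain ⟨M, hM0, hM⟩ := mellin_strip_bound P.f_modif (-1/2) 1 hmc
  refine ⟨M + 1, by linarith, fun s h1 h2 => ?_⟩
  have hre : (s / 2).re = s.re / 2 := by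
    rw [Complex.div_re]
    simp [Complex.normSq_apply]
    ring
  have heq : completedRiemannZeta₀ s = (P.Λ₀ (s / 2)) / 2 := rfl
  rw [heq]
  have hΛ : P.Λ₀ (s / 2) = mellin P.f_modif (s / 2) := rfl
  have := hM (s / 2) (by rw [hre]; linarith) (by rw [hre]; linarith)
  rw [hΛ] at heq ⊢
  rw [norm_div, Complex.norm_two]
  have h' : ‖mellin P.f_modif (s / 2)‖ ≤ M := by
    exact this
  linarith

noncomputable def xiG (s : ℂ) : ℂ := (s * (s - 1) * completedRiemannZeta₀ s + 1) / 2

lemma xiG_diff : Differentiable ℂ xiG := by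
  unfold xiG
  apply Differentiable.div_const
  exact ((differentiable_id.mul (differentiable_id.sub_const 1)).mul
    differentiable_completedZeta₀).add_const 1

lemma xiG_one_sub (s : ℂ) : xiG (1 - s) = xiG s := by
  unfold xiG
  rw [completedRiemannZeta₀_one_sub]
  ring_nf

lemma xiG_eq_Lambda (s : ℂ) (h0 : s ≠ 0) (h1 : s ≠ 1) :
    xiG s = s * (s - 1) * completedRiemannZeta s / 2 := by
  unfold xiG
  rw [completedRiemannZeta_eq]
  have h1' : (1 : ℂ) - s ≠ 0 := sub_ne_zero.mpr (Ne.symm h1)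
  field_simp
  ring

lemma xiFn_eq_xiG (s : ℂ) (h0 : s ≠ 0) (h1 : s ≠ 1) (hG : Complex.Gammaℝ s ≠ 0) :
    riemannXiFn s = xiG s := by
  have hζ : riemannZeta s = completedRiemannZeta s / Complex.Gammaℝ s :=
    riemannZeta_def_of_ne_zero h0
  have hΛ : (π : ℂ) ^ (-s / 2) * Complex.Gamma (s / 2) = Complex.Gammaℝ s :=
    (Complex.Gammaℝ_def s).symm
  have : riemannXiFn s = (1 / 2 : ℂ) * s * (s - 1)
      * ((π : ℂ) ^ (-s / 2) * Complex.Gamma (s / 2)) * riemannZeta s := by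
    unfold riemannXiFn; ring
  rw [this, hΛ, hζ, xiG_eq_Lambda s h0 h1]
  field_simp

lemma xiG_edge : ∃ K : ℝ, 1 ≤ K ∧ ∀ z : ℂ, z.re = 2 →
    ‖xiG z‖ ≤ K * (2 + |z.im|) ^ 3 * Real.exp (-π * |z.im| / 4) := by
  obtain ⟨K₁, hK₁, hΓ⟩ := gamma_decay
  refine ⟨K₁, hK₁, fun z hz => ?_⟩
  set T := |z.im| with hT
  have hT0 : 0 ≤ T := abs_nonneg _
  have h0 : z ≠ 0 := fun h => by simp [h] at hz
  have h1 : z ≠ 1 := fun h => by rw [h] at hz; simp at hz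
  have hG : Complex.Gammaℝ z ≠ 0 :=
    Complex.Gammaℝ_ne_zero_of_re_pos (by rw [hz]; norm_num)
  have hζ : riemannZeta z = completedRiemannZeta z / Complex.Gammaℝ z :=
    riemannZeta_def_of_ne_zero h0
  have hΛeq : completedRiemannZeta z = riemannZeta z * Complex.Gammaℝ z :=
    (div_eq_iff hG).mp hζ.symm
  have e1 : ‖z‖ ≤ 2 + T := by
    calc ‖z‖ ≤ |z.re| + |z.im| := Complex.norm_le_abs_re_add_abs_im z
      _ ≤ 2 + T := by rw [hz]; norm_num [hT]
  have e2 : ‖z - 1‖ ≤ 2 + T := by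
    calc ‖z - 1‖ ≤ |(z - 1).re| + |(z - 1).im| :=
          Complex.norm_le_abs_re_add_abs_im _
      _ ≤ 2 + T := by
          simp only [Complex.sub_re, Complex.sub_im, Complex.one_re, Complex.one_im, hz]
          have h1' : |(2:ℝ) - 1| = 1 := by norm_num
          have h2' : |z.im - 0| = T := by rw [hT, sub_zero]
          rw [h1', h2']
          linarith
  have hz2 : z / 2 = 1 + (z.im / 2 : ℝ) * Complex.I := by
    apply Complex.ext
    · simp [Complex.div_re, Complex.normSq_apply, hz]
      try norm_num
    · simp [Complex.div_im, Complex.normSq_apply, hz]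
      try norm_num
  have e3 : ‖Complex.Gammaℝ z‖ ≤ K₁ * (2 + T) * Real.exp (-π * T / 4) := by
    rw [Complex.Gammaℝ_def, norm_mul]
    have ha : ‖(π : ℂ) ^ (-z / 2)‖ = π ^ ((-z / 2).re) :=
      Complex.norm_cpow_eq_rpow_re_of_pos Real.pi_pos _
    have hre : (-z / 2).re = -1 := by
      simp [Complex.div_re, Complex.normSq_apply, hz]
      try norm_num
    have ha1 : ‖(π : ℂ) ^ (-z / 2)‖ ≤ 1 := by
      rw [ha, hre, Real.rpow_neg_one]
      rw [inv_le_one_iff₀]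
      right
      linarith [Real.pi_gt_three]
    have hb : ‖Complex.Gamma (z / 2)‖
        ≤ K₁ * (1 + T / 2) * Real.exp (-π * T / 4) := by
      rw [hz2]
      have := hΓ (z.im / 2)
      have habs2 : |z.im / 2| = T / 2 := by rw [abs_div]; norm_num [hT]
      rw [habs2] at this
      calc ‖Complex.Gamma (1 + (z.im / 2 : ℝ) * Complex.I)‖
          ≤ K₁ * (1 + T / 2) * Real.exp (-π * (T / 2) / 2) := this
        _ = K₁ * (1 + T / 2) * Real.exp (-π * T / 4) := by ring_nf
    calc ‖(π : ℂ) ^ (-z / 2)‖ * ‖Complex.Gamma (z / 2)‖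
        ≤ 1 * (K₁ * (1 + T / 2) * Real.exp (-π * T / 4)) := by
          apply mul_le_mul ha1 hb (norm_nonneg _) zero_le_one
      _ ≤ K₁ * (2 + T) * Real.exp (-π * T / 4) := by
          rw [one_mul]
          have : (1 : ℝ) + T / 2 ≤ 2 + T := by linarith
          gcongr
  have e4 : ‖riemannZeta z‖ ≤ 2 := zeta_edge_bound z hz
  have habs : ‖xiG z‖ = ‖z‖ * ‖z - 1‖
      * (‖riemannZeta z‖ * ‖Complex.Gammaℝ z‖) / 2 := by
    rw [xiG_eq_Lambda z h0 h1, hΛeq]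
    rw [norm_div, norm_mul, norm_mul, norm_mul, Complex.norm_two]
  rw [habs]
  calc ‖z‖ * ‖z - 1‖
      * (‖riemannZeta z‖ * ‖Complex.Gammaℝ z‖) / 2
      ≤ (2 + T) * (2 + T) * (2 * (K₁ * (2 + T) * Real.exp (-π * T / 4))) / 2 := by
        gcongr
    _ = K₁ * (2 + T) ^ 3 * Real.exp (-π * T / 4) := by ring

set_option maxHeartbeats 1000000 in
lemma xiG_PL : ∃ C : ℝ, 0 < C ∧ ∀ z : ℂ, -1 ≤ z.re → z.re ≤ 2 →
    ‖xiG z * Complex.exp (-((π : ℂ) / 4) * Complex.I * z)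
      * ((z + 3)⁻¹) ^ 3‖ ≤ C := by
  obtain ⟨K, hK1, hedge⟩ := xiG_edge
  obtain ⟨M, hM0, hM⟩ := Lambda0_strip_bound
  set F : ℂ → ℂ := fun z => xiG z * Complex.exp (-((π : ℂ) / 4) * Complex.I * z)
      * ((z + 3)⁻¹) ^ 3 with hF
  have hexpabs : ∀ z : ℂ, ‖Complex.exp (-((π : ℂ) / 4) * Complex.I * z)‖
      = Real.exp (π / 4 * z.im) := by
    intro z
    rw [Complex.norm_exp]
    congr 1
    have h : -((π : ℂ) / 4) * Complex.I * z = ((-(π / 4) : ℝ) : ℂ) * (Complex.I * z) := by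
      push_cast; ring
    rw [h]
    simp [Complex.mul_re, Complex.mul_im]
    try ring
  have habsF : ∀ z : ℂ, ‖F z‖ = ‖xiG z‖
      * Real.exp (π / 4 * z.im) * ((‖z + 3‖)⁻¹) ^ 3 := by
    intro z
    rw [hF]
    simp only [norm_mul, norm_pow, norm_inv]
    rw [hexpabs]
  have hz3 : ∀ z : ℂ, -1 ≤ z.re → (1 : ℝ) ≤ ‖z + 3‖ := by
    intro z hz
    calc (1 : ℝ) ≤ (z + 3).re := by simp [Complex.add_re]; linarith
      _ ≤ ‖z + 3‖ := Complex.re_le_norm _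
  have hU : ∀ z : ℂ, -2 < z.re → z + 3 ≠ 0 := by
    intro z hz h
    have h2 : (z + 3).re = 0 := by rw [h]; simp
    simp [Complex.add_re] at h2
    linarith
  have hdiff : DifferentiableOn ℂ F {z : ℂ | -2 < z.re} := by
    apply DifferentiableOn.mul
    · apply DifferentiableOn.mul
      · exact xiG_diff.differentiableOn
      · apply Differentiable.differentiableOn
        apply Differentiable.cexp
        exact (differentiable_const _).mul differentiable_id
    · apply DifferentiableOn.pow
      apply DifferentiableOn.inv
      · exact (differentiable_id.add_const 3).differentiableOn
      · exact fun z hz => hU z hz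
  have hfd : DiffContOnCl ℂ F (Complex.re ⁻¹' Set.Ioo (-1) 2) := by
    constructor
    · apply hdiff.mono
      intro z hz
      simp only [Set.mem_preimage, Set.mem_Ioo] at hz
      show -2 < z.re
      linarith [hz.1]
    · apply hdiff.continuousOn.mono
      have h1 : closure (Complex.re ⁻¹' Set.Ioo (-1 : ℝ) 2) ⊆ Complex.re ⁻¹' Set.Icc (-1) 2 := by
        refine subset_trans (Complex.continuous_re.closure_preimage_subset _) ?_
        rw [closure_Ioo (by norm_num : (-1 : ℝ) ≠ 2)]
      intro z hz
      have h2 := h1 hz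
      simp only [Set.mem_preimage, Set.mem_Icc] at h2
      show -2 < z.re
      linarith [h2.1]
  -- edge bounds
  have hedgeF : ∀ z : ℂ, (z.re = 2 ∨ z.re = -1) → ‖F z‖ ≤ 4 * K := by
    intro z hz
    set T := |z.im| with hT
    have hT0 : 0 ≤ T := abs_nonneg _
    have hx : ‖xiG z‖ ≤ K * (2 + T) ^ 3 * Real.exp (-π * T / 4) := by
      rcases hz with hz | hz
      · exact hedge z hz
      · have h1 : (1 - z).re = 2 := by simp [Complex.sub_re, hz]; norm_num
        have h2 : |(1 - z).im| = T := by simp [Complex.sub_im, hT]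
        have := hedge (1 - z) h1
        rw [h2, xiG_one_sub] at this
        exact this
    have hre3 : (z + 3).re = z.re + 3 := by simp [Complex.add_re]
    have hsqabs : ‖z + 3‖ ^ 2 = (z.re + 3) ^ 2 + z.im ^ 2 := by
      rw [Complex.sq_norm, Complex.normSq_apply, Complex.add_re, Complex.add_im]
      simp
      ring
    have hTsq : T ^ 2 = z.im ^ 2 := sq_abs z.im
    have h23 : 2 + T ≤ (3 / 2) * ‖z + 3‖ := by
      have hsq : (2 + T) ^ 2 ≤ ((3 / 2) * ‖z + 3‖) ^ 2 := by
        rw [mul_pow, hsqabs]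
        rcases hz with hz | hz <;> rw [hz] <;> nlinarith [sq_nonneg (T - 2), hTsq]
      exact (pow_le_pow_iff_left₀ (by linarith) (by positivity) two_ne_zero).mp hsq
    have h3 : (2 + T) ^ 3 ≤ 4 * ‖z + 3‖ ^ 3 := by
      have := pow_le_pow_left₀ (by linarith : (0:ℝ) ≤ 2 + T) h23 3
      have hpos : (0:ℝ) ≤ ‖z + 3‖ := norm_nonneg _
      nlinarith [pow_nonneg hpos 3]
    have hE : Real.exp (π / 4 * z.im) ≤ Real.exp (π * T / 4) := by
      apply Real.exp_le_exp.mpr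
      have h4 : z.im ≤ T := le_abs_self _
      nlinarith [Real.pi_pos]
    have hzre : -1 ≤ z.re := by rcases hz with hz | hz <;> rw [hz] <;> norm_num
    have habs1 := hz3 z hzre
    have habspos : (0:ℝ) < ‖z + 3‖ := by linarith
    rw [habsF]
    calc ‖xiG z‖ * Real.exp (π / 4 * z.im) * ((‖z + 3‖)⁻¹) ^ 3
        ≤ (K * (2 + T) ^ 3 * Real.exp (-π * T / 4)) * Real.exp (π * T / 4)
          * ((‖z + 3‖)⁻¹) ^ 3 := by
          gcongr
      _ = K * (2 + T) ^ 3 * ((‖z + 3‖)⁻¹) ^ 3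
          * (Real.exp (-π * T / 4) * Real.exp (π * T / 4)) := by ring
      _ = K * (2 + T) ^ 3 * ((‖z + 3‖)⁻¹) ^ 3 := by
          rw [← Real.exp_add, show -π * T / 4 + π * T / 4 = 0 by ring, Real.exp_zero, mul_one]
      _ ≤ K * (4 * ‖z + 3‖ ^ 3) * ((‖z + 3‖)⁻¹) ^ 3 := by
          gcongr
      _ = 4 * K * (‖z + 3‖ ^ 3 * (‖z + 3‖ ^ 3)⁻¹) := by
          rw [inv_pow]
          ring
      _ = 4 * K := by
          rw [mul_inv_cancel₀ (by positivity)]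
          ring
  -- growth bound
  have hgrow : ∃ c < π / (2 - (-1) : ℝ), ∃ B, F =O[Filter.comap (_root_.abs ∘ Complex.im)
      Filter.atTop ⊓ Filter.principal (Complex.re ⁻¹' Set.Ioo (-1) 2)]
      fun z => Real.exp (B * Real.exp (c * |z.im|)) := by
    refine ⟨1, by nlinarith [Real.pi_gt_three], 1, ?_⟩
    apply Asymptotics.IsBigO.of_bound 1
    set c₀ : ℝ := Real.log (M + 1) + 6 with hc₀
    set R : ℝ := 16 + max c₀ 0 with hR
    have h1 : ∀ᶠ z : ℂ in Filter.comap (_root_.abs ∘ Complex.im) Filter.atTop,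
        R ≤ |z.im| := Filter.tendsto_comap.eventually (Filter.eventually_ge_atTop R)
    rw [Filter.eventually_inf_principal]
    filter_upwards [h1] with z hz1 hz2
    simp only [Set.mem_preimage, Set.mem_Ioo] at hz2
    set u := |z.im| with hu
    have hu16 : 16 ≤ u := by
      have : (16:ℝ) ≤ R := by rw [hR]; nlinarith [le_max_right c₀ (0:ℝ)]
      linarith
    have huc : c₀ ≤ u := by
      have : c₀ ≤ R := by rw [hR]; nlinarith [le_max_left c₀ (0:ℝ)]
      linarith
    have hu0 : (0:ℝ) ≤ u := by linarith
    have hz' : ‖z‖ ≤ 4 + u := by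
      calc ‖z‖ ≤ |z.re| + |z.im| := Complex.norm_le_abs_re_add_abs_im z
        _ ≤ 4 + u := by
            have : |z.re| ≤ 2 := abs_le.mpr ⟨by linarith [hz2.1], by linarith [hz2.2]⟩
            linarith
    have hz1' : ‖z - 1‖ ≤ 4 + u := by
      calc ‖z - 1‖ ≤ |(z-1).re| + |(z-1).im| := Complex.norm_le_abs_re_add_abs_im _
        _ ≤ 4 + u := by
            simp only [Complex.sub_re, Complex.sub_im, Complex.one_re, Complex.one_im, sub_zero]
            have : |z.re - 1| ≤ 3 := abs_le.mpr ⟨by linarith [hz2.1], by linarith [hz2.2]⟩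
            linarith
    have hxiG : ‖xiG z‖ ≤ (4 + u) ^ 2 * (M + 1) := by
      have hL := hM z hz2.1.le hz2.2.le
      have habs : ‖xiG z‖
          ≤ (‖z‖ * ‖z - 1‖ * ‖completedRiemannZeta₀ z‖ + 1) / 2 := by
        unfold xiG
        rw [norm_div, Complex.norm_two]
        have h6 := norm_add_le (z * (z - 1) * completedRiemannZeta₀ z) 1
        rw [norm_mul, norm_mul] at h6
        simp only [norm_one] at h6
        linarith
      have h7 : ‖z‖ * ‖z - 1‖ * ‖completedRiemannZeta₀ z‖
          ≤ (4 + u) * (4 + u) * M := by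
        apply mul_le_mul (mul_le_mul hz' hz1' (norm_nonneg _) (by linarith)) hL
          (norm_nonneg _) (by positivity)
      calc ‖xiG z‖ ≤ ((4 + u) * (4 + u) * M + 1) / 2 := by linarith
        _ ≤ (4 + u) ^ 2 * (M + 1) := by nlinarith
    have hFb : ‖F z‖ ≤ (4 + u) ^ 2 * (M + 1) * Real.exp u := by
      rw [habsF]
      have hinv : ((‖z + 3‖)⁻¹) ^ 3 ≤ 1 := by
        have := hz3 z hz2.1.le
        have h8 : (‖z + 3‖)⁻¹ ≤ 1 := by
          rw [inv_le_one_iff₀]; right; linarith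
        calc ((‖z + 3‖)⁻¹) ^ 3 ≤ 1 ^ 3 := by
              apply pow_le_pow_left₀ (by positivity) h8
          _ = 1 := one_pow 3
      have hexpu : Real.exp (π / 4 * z.im) ≤ Real.exp u := by
        apply Real.exp_le_exp.mpr
        have h9 : z.im ≤ u := le_abs_self _
        nlinarith [Real.pi_pos, Real.pi_le_four]
      calc ‖xiG z‖ * Real.exp (π / 4 * z.im) * ((‖z + 3‖)⁻¹) ^ 3
          ≤ ((4 + u) ^ 2 * (M + 1)) * Real.exp u * 1 := by
            gcongr
        _ = (4 + u) ^ 2 * (M + 1) * Real.exp u := by ring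
    have hsq : (4 + u) ^ 2 ≤ Real.exp (6 + 2 * u) := by
      have h10 := Real.add_one_le_exp (3 + u)
      have h11 : Real.exp (6 + 2 * u) = Real.exp (3 + u) * Real.exp (3 + u) := by
        rw [← Real.exp_add]; ring_nf
      nlinarith [Real.exp_pos (3 + u)]
    have hexpu2 : Real.exp u ≥ u ^ 2 / 4 := by
      have h12 := Real.add_one_le_exp (u / 2)
      have h13 : Real.exp u = Real.exp (u / 2) * Real.exp (u / 2) := by
        rw [← Real.exp_add]; ring_nf
      nlinarith [Real.exp_pos (u / 2)]
    have husq : 16 * u ≤ u ^ 2 := by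
      rw [sq]; exact mul_le_mul_of_nonneg_right hu16 hu0
    have hkey : c₀ + 3 * u ≤ Real.exp u := by linarith
    have hfinal : (4 + u) ^ 2 * (M + 1) * Real.exp u ≤ Real.exp (Real.exp u) := by
      have h14 : M + 1 = Real.exp (Real.log (M + 1)) := by
        rw [Real.exp_log (by linarith)]
      calc (4 + u) ^ 2 * (M + 1) * Real.exp u
          ≤ Real.exp (6 + 2 * u) * (M + 1) * Real.exp u := by gcongr
        _ = Real.exp (c₀ + 3 * u) := by
            rw [h14, ← Real.exp_add, ← Real.exp_add, hc₀]
            ring_nf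
        _ ≤ Real.exp (Real.exp u) := Real.exp_le_exp.mpr hkey
    have hgoal : ‖F z‖ ≤ 1 * ‖Real.exp (1 * Real.exp (1 * |z.im|))‖ := by
      rw [one_mul, Real.norm_eq_abs, _root_.abs_of_pos (Real.exp_pos _), one_mul, one_mul]
      exact le_trans hFb hfinal
    exact hgoal
  refine ⟨4 * K, by linarith, fun z h1 h2 => ?_⟩
  have := PhragmenLindelof.vertical_strip hfd hgrow
    (fun w hw => hedgeF w (Or.inr hw)) (fun w hw => hedgeF w (Or.inl hw)) h1 h2
  exact this

theorem Xi_decay_bound :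
    ∃ A C T : ℝ, 0 < A ∧ 0 < C ∧ 0 < T ∧
      ∀ t : ℝ, T ≤ t →
        ‖riemannXiCap t‖ ≤ C * t ^ A * Real.exp (-π * t / 4) := by
  obtain ⟨C₀, hC₀, hPL⟩ := xiG_PL
  refine ⟨3, C₀ * 1000, 1, by norm_num, by positivity, by norm_num, fun t ht => ?_⟩
  set s : ℂ := 1 / 2 + Complex.I * (t : ℂ) with hs
  have hsre : s.re = 1 / 2 := by simp [hs]
  have hsim : s.im = t := by simp [hs]
  have h0 : s ≠ 0 := fun h => by
    rw [h] at hsim; simp at hsim; rw [← hsim] at ht; norm_num at ht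
  have h1 : s ≠ 1 := fun h => by
    rw [h] at hsim; simp at hsim; rw [← hsim] at ht; norm_num at ht
  have hG : Complex.Gammaℝ s ≠ 0 :=
    Complex.Gammaℝ_ne_zero_of_re_pos (by rw [hsre]; norm_num)
  have hcap : riemannXiCap t = riemannXiFn s := rfl
  rw [hcap, xiFn_eq_xiG s h0 h1 hG]
  have hpl := hPL s (by rw [hsre]; norm_num) (by rw [hsre]; norm_num)
  have hexp : ‖Complex.exp (-((π : ℂ) / 4) * Complex.I * s)‖
      = Real.exp (π / 4 * t) := by
    rw [Complex.norm_exp]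
    congr 1
    have h : -((π : ℂ) / 4) * Complex.I * s = ((-(π / 4) : ℝ) : ℂ) * (Complex.I * s) := by
      push_cast; ring
    rw [h]
    simp [Complex.mul_re, Complex.mul_im, hsim]
    try ring
  rw [norm_mul, norm_mul, hexp, norm_pow, norm_inv] at hpl
  set a := ‖xiG s‖ with ha
  set b := ‖s + 3‖ with hb
  set e := Real.exp (π / 4 * t) with he
  have hb0 : (7:ℝ)/2 ≤ b := by
    have h2 : (s + 3).re = 7 / 2 := by
      rw [Complex.add_re, hsre]
      norm_num
    calc (7:ℝ)/2 = (s + 3).re := h2.symm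
      _ ≤ b := Complex.re_le_norm _
  have hbpos : 0 < b := by linarith
  have hepos : 0 < e := Real.exp_pos _
  have key : a ≤ C₀ * b ^ 3 * e⁻¹ := by
    have h3 : a = (a * e * (b⁻¹) ^ 3) * b ^ 3 * e⁻¹ := by
      field_simp
    rw [h3]
    have h4 : (a * e * (b⁻¹) ^ 3) * b ^ 3 * e⁻¹ ≤ C₀ * b ^ 3 * e⁻¹ := by
      gcongr
    exact h4
  have hble : b ≤ 5 * t := by
    calc b ≤ |(s + 3).re| + |(s + 3).im| := Complex.norm_le_abs_re_add_abs_im _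
      _ = 7 / 2 + t := by
          have hre5 : (s + 3).re = 7 / 2 := by rw [Complex.add_re, hsre]; norm_num
          have him5 : (s + 3).im = t := by rw [Complex.add_im, hsim]; norm_num
          rw [hre5, him5, _root_.abs_of_nonneg (by linarith : (0:ℝ) ≤ t),
            _root_.abs_of_nonneg (by norm_num : (0:ℝ) ≤ 7/2)]
      _ ≤ 5 * t := by linarith
  have hb3 : b ^ 3 ≤ 125 * t ^ 3 := by
    calc b ^ 3 ≤ (5 * t) ^ 3 := pow_le_pow_left₀ hbpos.le hble 3
      _ = 125 * t ^ 3 := by ring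
  have heinv : e⁻¹ = Real.exp (-π * t / 4) := by
    rw [← Real.exp_neg]
    congr 1
    ring
  calc a ≤ C₀ * b ^ 3 * e⁻¹ := key
    _ ≤ C₀ * (125 * t ^ 3) * e⁻¹ := by gcongr
    _ = C₀ * 125 * t ^ 3 * Real.exp (-π * t / 4) := by rw [heinv]; ring
    _ ≤ C₀ * 1000 * t ^ (3:ℝ) * Real.exp (-π * t / 4) := by
        rw [show t ^ (3:ℝ) = t ^ (3:ℕ) by
          rw [show (3:ℝ) = ((3:ℕ):ℝ) by norm_num, Real.rpow_natCast]]
        gcongr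
        linarith
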